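/- Let P : S × A → Δ(S) be a transition kernel on a finite state space S with joint action space A = Π_{i∈N} A_i, and suppose P(s'|s, a) = Σ_{j∈C} F_j(s'|s, a_j) for nonnegative functions F_j depending only on player j's action, for some nonempty subset C of players. Then for each j ∈ C and each state s, the quantity w_j(s, a_j) := Σ_{s'} F_j(s'|s, a_j) is independent of a_j; consequently there exist weights w_j(s) ≥ 0 summing to 1 over j ∈ C and transition kernels P_j(·|s, a_j) ∈ Δ(S) such that P(·|s, a) = Σ_{j∈C} w_j(s) P_j(·|s, a_j). -/

import Mathlib

/-- If a transition kernel decomposes as `P(s'|s,a) = ∑_{j∈C} F_j(s'|s,a_j)` with `F_j ≥ 0`,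
then each `w_j(s,a_j) = ∑_{s'} F_j(s'|s,a_j)` is independent of `a_j`, and `P` is an ensemble
`P(·|s,a) = ∑_{j∈C} w_j(s) P_j(·|s,a_j)` of single-controller kernels, with weights
`w_j(s) ≥ 0` summing to 1 over `j ∈ C`. -/
theorem ensemble_of_decomposable_kernel {S N : Type*} [Fintype S] [Nonempty S]
    [Fintype N] [DecidableEq N]
    (A : N → Type*) [∀ i, Fintype (A i)] [∀ i, Nonempty (A i)]
    (C : Finset N) (hC : C.Nonempty)
    (F : ∀ j, S → A j → S → ℝ)
    (hFnn : ∀ j ∈ C, ∀ (s : S) (aj : A j) (s' : S), 0 ≤ F j s aj s')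
    (hker : ∀ (s : S) (a : ∀ i, A i), ∑ s', ∑ j ∈ C, F j s (a j) s' = 1) :
    (∀ j ∈ C, ∀ (s : S) (aj aj' : A j), ∑ s', F j s aj s' = ∑ s', F j s aj' s') ∧
    ∃ (w : N → S → ℝ) (Pk : ∀ j, S → A j → S → ℝ),
      (∀ j ∈ C, ∀ s, 0 ≤ w j s) ∧
      (∀ s, ∑ j ∈ C, w j s = 1) ∧
      (∀ j ∈ C, ∀ (s : S) (aj : A j) (s' : S), 0 ≤ Pk j s aj s') ∧
      (∀ j ∈ C, ∀ (s : S) (aj : A j), ∑ s', Pk j s aj s' = 1) ∧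
      (∀ (s : S) (a : ∀ i, A i) (s' : S),
        ∑ j ∈ C, F j s (a j) s' = ∑ j ∈ C, w j s * Pk j s (a j) s') := by
  classical
  have a0 : ∀ i, A i := fun i => Classical.arbitrary (A i)
  -- independence of marginals in a_j
  have hindep : ∀ j ∈ C, ∀ (s : S) (aj aj' : A j),
      ∑ s', F j s aj s' = ∑ s', F j s aj' s' := by
    intro j hj s aj aj'
    have key : ∀ b : A j,
        (∑ s', F j s b s') +
          ∑ k ∈ C.erase j, ∑ s', F k s (a0 k) s' = 1 := by
      intro b
      have h := hker s (Function.update a0 j b)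
      rw [Finset.sum_comm] at h
      rw [← Finset.add_sum_erase _ _ hj] at h
      have h1 : (Function.update a0 j b) j = b := Function.update_self _ _ _
      rw [h1] at h
      have h2 : ∀ k ∈ C.erase j,
          ∑ s', F k s ((Function.update a0 j b) k) s' = ∑ s', F k s (a0 k) s' := by
        intro k hk
        rw [Function.update_of_ne (Finset.ne_of_mem_erase hk)]
      rw [Finset.sum_congr rfl h2] at h
      exact h
    have := (key aj).trans (key aj').symm
    linarith
  refine ⟨hindep, ?_⟩
  set w : N → S → ℝ := fun j s => ∑ s', F j s (a0 j) s' with hw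
  set Pk : ∀ j, S → A j → S → ℝ := fun j s aj s' =>
    if w j s = 0 then (Fintype.card S : ℝ)⁻¹ else F j s aj s' / w j s with hPk
  have hwnn : ∀ j ∈ C, ∀ s, 0 ≤ w j s := fun j hj s =>
    Finset.sum_nonneg fun s' _ => hFnn j hj s _ s'
  have hwsum : ∀ s, ∑ j ∈ C, w j s = 1 := by
    intro s
    have h := hker s a0
    rw [Finset.sum_comm] at h
    exact h
  have hFzero : ∀ j ∈ C, ∀ (s : S) (aj : A j), w j s = 0 → ∀ s', F j s aj s' = 0 := by
    intro j hj s aj h0 s'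
    have hsum : ∑ s', F j s aj s' = 0 := (hindep j hj s aj (a0 j)).trans h0
    have := Finset.sum_eq_zero_iff_of_nonneg
      (fun s' _ => hFnn j hj s aj s') |>.mp hsum
    exact this s' (Finset.mem_univ s')
  have cardpos : (0:ℝ) < (Fintype.card S : ℝ) := by
    exact_mod_cast Fintype.card_pos
  refine ⟨w, Pk, hwnn, hwsum, ?_, ?_, ?_⟩
  · intro j hj s aj s'
    simp only [hPk]
    split
    · positivity
    · next h =>
      exact div_nonneg (hFnn j hj s aj s') (hwnn j hj s)
  · intro j hj s aj
    simp only [hPk]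
    split
    · rw [Finset.sum_const, Finset.card_univ, nsmul_eq_mul]
      field_simp
    · next h =>
      rw [← Finset.sum_div, hindep j hj s aj (a0 j)]
      field_simp
      rfl
  · intro s a s'
    refine Finset.sum_congr rfl fun j hj => ?_
    simp only [hPk]
    split
    · next h => rw [h, hFzero j hj s (a j) h s', zero_mul]
    · next h => field_simp
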